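/- (Mechanism-level whole-image dominance underlying Theorem 1.) Let σ > 0, let d ≥ 1 index pixels and T be a finite index set of guided steps, and for each pixel i ∈ {1,…,d} and step t ∈ T let σ_{t,i} > 0, c_{t,i} ∈ ℝ, and m_{t,i} ∈ ℝ, with ∑_{t ∈ T} c_{t,i}²/σ_{t,i}² ≤ 1/σ² for every i. For x ∈ ℝ^d, let P_x denote the product measure on ℝ^{T×d} whose (t,i)-th coordinate is the Gaussian measure on ℝ with mean m_{t,i} + c_{t,i}·x_i and variance σ_{t,i}². Let Φ(t) denote the standard normal CDF, Φ(t) = (2π)^{−1/2}·∫_{−∞}^t e^{−u²/2} du. Then for all x, x' ∈ ℝ^d, every Borel set E ⊆ ℝ^{T×d}, and every a ∈ ℝ: if P_x(E) ≥ Φ(a) then P_{x'}(E) ≥ Φ(a − ‖x − x'‖₂/σ). -/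

import Mathlib

open MeasureTheory ProbabilityTheory

/-- The standard normal cumulative distribution function. -/
noncomputable def stdNormalCDF (t : ℝ) : ℝ :=
  ∫ u in Set.Iic t, (Real.sqrt (2 * Real.pi))⁻¹ * Real.exp (-u ^ 2 / 2)

open Real Set
open scoped NNReal ENNReal

lemma stdNormalCDF_eq (t : ℝ) :
    stdNormalCDF t = ∫ u in Set.Iic t, gaussianPDFReal 0 1 u := by
  unfold stdNormalCDF gaussianPDFReal
  norm_num

lemma stdNormalCDF_mono : Monotone stdNormalCDF := by
  intro s t hst
  rw [stdNormalCDF_eq, stdNormalCDF_eq]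
  refine setIntegral_mono_set ((integrable_gaussianPDFReal 0 1).integrableOn) ?_ ?_
  · exact Filter.Eventually.of_forall fun u => gaussianPDFReal_nonneg 0 1 u
  · exact Filter.Eventually.of_forall (Set.Iic_subset_Iic.2 hst)

lemma gaussianReal01_Iic (s : ℝ) :
    gaussianReal 0 1 (Set.Iic s) = ENNReal.ofReal (stdNormalCDF s) := by
  rw [gaussianReal_apply _ one_ne_zero _, stdNormalCDF_eq]
  simp only [gaussianPDF]
  rw [← ofReal_integral_eq_lintegral_ofReal
    ((integrable_gaussianPDFReal 0 1).integrableOn)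
    (Filter.Eventually.of_forall fun u => gaussianPDFReal_nonneg 0 1 u)]

lemma gaussianReal_Iic (μ : ℝ) (v : ℝ≥0) (hv : v ≠ 0) (t : ℝ) :
    gaussianReal μ v (Set.Iic t) = ENNReal.ofReal (stdNormalCDF ((t - μ) / Real.sqrt v)) := by
  have hv' : (0:ℝ) < (v:ℝ) := lt_of_le_of_ne v.2 (by exact_mod_cast (Ne.symm hv))
  have hs : (0:ℝ) < Real.sqrt v := Real.sqrt_pos.2 hv'
  have hmap : (gaussianReal 0 1).map (fun x => Real.sqrt v * x + μ) = gaussianReal μ v := by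
    have h1 : (gaussianReal 0 1).map (fun x => Real.sqrt v * x)
        = gaussianReal 0 (⟨(Real.sqrt v)^2, sq_nonneg _⟩ * 1) := by
      rw [gaussianReal_map_const_mul, mul_zero]
      rfl
    have h2 : (⟨(Real.sqrt v)^2, sq_nonneg _⟩ * 1 : ℝ≥0) = v := by
      apply NNReal.eq
      show (Real.sqrt v)^2 * 1 = (v:ℝ)
      rw [mul_one, Real.sq_sqrt hv'.le]
    have hcomp : (fun x => Real.sqrt v * x + μ)
        = (fun y => y + μ) ∘ (fun x => Real.sqrt v * x) := rfl
    rw [hcomp, ← Measure.map_map (measurable_id'.add_const μ)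
      (measurable_id'.const_mul _), h1, h2, gaussianReal_map_add_const μ, zero_add]
  rw [← hmap, Measure.map_apply (by fun_prop) measurableSet_Iic]
  have : (fun x => Real.sqrt v * x + μ) ⁻¹' (Set.Iic t) = Set.Iic ((t - μ)/Real.sqrt v) := by
    ext y
    simp only [Set.mem_preimage, Set.mem_Iic]
    rw [le_div_iff₀ hs]
    constructor <;> intro h <;> nlinarith
  rw [this, gaussianReal01_Iic]

lemma gaussianPDFReal_mul_gaussianPDFReal (μ₁ μ₂ : ℝ) (v₁ v₂ : ℝ≥0)
    (h₁ : v₁ ≠ 0) (h₂ : v₂ ≠ 0) (z x : ℝ) :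
    gaussianPDFReal μ₁ v₁ x * gaussianPDFReal (μ₂ + x) v₂ z
      = gaussianPDFReal (μ₁ + μ₂) (v₁ + v₂) z *
        gaussianPDFReal (((v₂ : ℝ) * μ₁ + (v₁ : ℝ) * (z - μ₂)) / ((v₁ : ℝ) + (v₂ : ℝ)))
          (v₁ * v₂ / (v₁ + v₂)) x := by
  have V1 : (0:ℝ) < (v₁:ℝ) := lt_of_le_of_ne v₁.2 (by exact_mod_cast (Ne.symm h₁))
  have V2 : (0:ℝ) < (v₂:ℝ) := lt_of_le_of_ne v₂.2 (by exact_mod_cast (Ne.symm h₂))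
  have hsum : (0:ℝ) < (v₁:ℝ) + (v₂:ℝ) := by linarith
  have hvbar : ((v₁ * v₂ / (v₁ + v₂) : ℝ≥0) : ℝ) = (v₁:ℝ) * v₂ / ((v₁:ℝ) + v₂) := by
    push_cast
    ring
  have hcast : ((v₁ + v₂ : ℝ≥0) : ℝ) = (v₁:ℝ) + (v₂:ℝ) := by push_cast; ring
  simp only [gaussianPDFReal_def, hvbar, hcast]
  have hπ : (0:ℝ) < 2 * π := by positivity
  -- constants
  have hc : (Real.sqrt (2 * π * v₁))⁻¹ * (Real.sqrt (2 * π * v₂))⁻¹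
      = (Real.sqrt (2 * π * ((v₁:ℝ) + v₂)))⁻¹ *
        (Real.sqrt (2 * π * ((v₁:ℝ) * v₂ / ((v₁:ℝ) + v₂))))⁻¹ := by
    rw [← mul_inv, ← mul_inv, ← Real.sqrt_mul (by positivity), ← Real.sqrt_mul (by positivity)]
    congr 1
    field_simp
  -- exponents
  have he : rexp (-(x - μ₁) ^ 2 / (2 * v₁)) * rexp (-(z - (μ₂ + x)) ^ 2 / (2 * v₂))
      = rexp (-(z - (μ₁ + μ₂)) ^ 2 / (2 * ((v₁:ℝ) + v₂)))
        * rexp (-(x - ((v₂:ℝ) * μ₁ + (v₁:ℝ) * (z - μ₂)) / ((v₁:ℝ) + v₂)) ^ 2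
            / (2 * ((v₁:ℝ) * v₂ / ((v₁:ℝ) + v₂)))) := by
    rw [← Real.exp_add, ← Real.exp_add]
    congr 1
    field_simp
    ring
  calc (Real.sqrt (2 * π * v₁))⁻¹ * rexp (-(x - μ₁) ^ 2 / (2 * v₁)) *
        ((Real.sqrt (2 * π * v₂))⁻¹ * rexp (-(z - (μ₂ + x)) ^ 2 / (2 * v₂)))
      = ((Real.sqrt (2 * π * v₁))⁻¹ * (Real.sqrt (2 * π * v₂))⁻¹) *
        (rexp (-(x - μ₁) ^ 2 / (2 * v₁)) * rexp (-(z - (μ₂ + x)) ^ 2 / (2 * v₂))) := by ring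
    _ = _ := by rw [hc, he]; ring

lemma gaussianReal_conv (μ₁ μ₂ : ℝ) (v₁ v₂ : ℝ≥0) :
    Measure.map (fun p : ℝ × ℝ => p.1 + p.2)
      ((gaussianReal μ₁ v₁).prod (gaussianReal μ₂ v₂)) = gaussianReal (μ₁ + μ₂) (v₁ + v₂) := by
  by_cases h₁ : v₁ = 0
  · subst h₁
    rw [gaussianReal_zero_var, Measure.dirac_prod,
      Measure.map_map (by fun_prop) (by fun_prop)]
    have : (fun p : ℝ × ℝ => p.1 + p.2) ∘ Prod.mk μ₁ = fun y => μ₁ + y := rfl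
    rw [this, gaussianReal_map_const_add, add_comm μ₂ μ₁, zero_add]
  by_cases h₂ : v₂ = 0
  · subst h₂
    rw [gaussianReal_zero_var, Measure.prod_dirac,
      Measure.map_map (by fun_prop) (by fun_prop)]
    have : (fun p : ℝ × ℝ => p.1 + p.2) ∘ (fun x => (x, μ₂)) = fun x => x + μ₂ := rfl
    rw [this, gaussianReal_map_add_const, add_zero]
  have hsum : v₁ + v₂ ≠ 0 := by
    simp [h₁]
  ext s hs
  rw [Measure.map_apply (by fun_prop) hs,
    Measure.prod_apply (hs.preimage (by fun_prop))]
  have hinner : ∀ x : ℝ,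
      gaussianReal μ₂ v₂ (Prod.mk x ⁻¹' ((fun p : ℝ × ℝ => p.1 + p.2) ⁻¹' s))
        = ∫⁻ z in s, gaussianPDF (μ₂ + x) v₂ z := by
    intro x
    have hpre : Prod.mk x ⁻¹' ((fun p : ℝ × ℝ => p.1 + p.2) ⁻¹' s) = (fun y => x + y) ⁻¹' s := rfl
    rw [hpre, ← Measure.map_apply (by fun_prop) hs, gaussianReal_map_const_add,
      gaussianReal_apply _ h₂]
  simp_rw [hinner]
  have hjoint : Measurable (Function.uncurry fun x z : ℝ => gaussianPDF (μ₂ + x) v₂ z) := by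
    simp only [gaussianPDF_def, gaussianPDFReal_def, Function.uncurry]
    fun_prop
  have houter : Measurable fun x : ℝ => ∫⁻ z in s, gaussianPDF (μ₂ + x) v₂ z :=
    Measurable.lintegral_prod_right hjoint
  rw [gaussianReal_of_var_ne_zero _ h₁,
    lintegral_withDensity_eq_lintegral_mul _ (measurable_gaussianPDF _ _) houter]
  have hmul : ∀ x : ℝ, (gaussianPDF μ₁ v₁ * fun x => ∫⁻ z in s, gaussianPDF (μ₂ + x) v₂ z) x
      = ∫⁻ z in s, gaussianPDF μ₁ v₁ x * gaussianPDF (μ₂ + x) v₂ z := by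
    intro x
    simp only [Pi.mul_apply]
    rw [← lintegral_const_mul _ (by
      have := hjoint.of_uncurry_left (x := x)
      exact this)]
  simp_rw [hmul]
  rw [lintegral_lintegral_swap]
  swap
  · refine AEMeasurable.mul (f := fun q : ℝ × ℝ => gaussianPDF μ₁ v₁ q.1)
      (g := Function.uncurry fun x z : ℝ => gaussianPDF (μ₂ + x) v₂ z) ?_ ?_
    · exact ((measurable_gaussianPDF μ₁ v₁).comp measurable_fst).aemeasurable
    · exact hjoint.aemeasurable
  have hkey : ∀ z : ℝ, ∫⁻ x, gaussianPDF μ₁ v₁ x * gaussianPDF (μ₂ + x) v₂ z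
      = gaussianPDF (μ₁ + μ₂) (v₁ + v₂) z := by
    intro z
    have hvbar : (v₁ * v₂ / (v₁ + v₂) : ℝ≥0) ≠ 0 := by
      positivity
    have : ∀ x : ℝ, gaussianPDF μ₁ v₁ x * gaussianPDF (μ₂ + x) v₂ z
        = gaussianPDF (μ₁ + μ₂) (v₁ + v₂) z
          * gaussianPDF (((v₂ : ℝ) * μ₁ + (v₁ : ℝ) * (z - μ₂)) / ((v₁ : ℝ) + (v₂ : ℝ)))
              (v₁ * v₂ / (v₁ + v₂)) x := by
      intro x
      simp only [gaussianPDF]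
      rw [← ENNReal.ofReal_mul (gaussianPDFReal_nonneg _ _ _),
        ← ENNReal.ofReal_mul (gaussianPDFReal_nonneg _ _ _),
        gaussianPDFReal_mul_gaussianPDFReal μ₁ μ₂ v₁ v₂ h₁ h₂ z x]
    simp_rw [this]
    rw [lintegral_const_mul _ (measurable_gaussianPDF _ _),
      lintegral_gaussianPDF_eq_one _ hvbar, mul_one]
  simp_rw [hkey]
  rw [gaussianReal_apply _ hsum]

noncomputable def nnsq (c : ℝ) : NNReal := ⟨c ^ 2, sq_nonneg c⟩

lemma linform_fin : ∀ (n : ℕ) (a μ : Fin n → ℝ) (v : Fin n → ℝ≥0),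
    Measure.map (fun ω : Fin n → ℝ => ∑ j, a j * ω j)
      (Measure.pi fun j => gaussianReal (μ j) (v j))
      = gaussianReal (∑ j, a j * μ j) (∑ j, nnsq (a j) * v j) := by
  intro n
  induction n with
  | zero =>
    intro a μ v
    have h0 : (fun ω : Fin 0 → ℝ => ∑ j, a j * ω j) = fun _ => (0:ℝ) := by
      ext ω; simp
    rw [h0, Measure.map_const, measure_univ, one_smul]
    simp [gaussianReal_zero_var]
  | succ n ih =>
    intro a μ v
    set e := MeasurableEquiv.piFinSuccAbove (fun _ : Fin (n+1) => ℝ) 0 with he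
    have mp := measurePreserving_piFinSuccAbove (fun j => gaussianReal (μ j) (v j)) 0
    have hSmeas : Measurable fun ω : Fin (n+1) → ℝ => ∑ j, a j * ω j := by fun_prop
    have hcomp : (fun ω : Fin (n+1) → ℝ => ∑ j, a j * ω j)
        = ((fun p : ℝ × ℝ => p.1 + p.2)
            ∘ (Prod.map (fun y : ℝ => a 0 * y)
                (fun ω : Fin n → ℝ => ∑ j, a ((0:Fin (n+1)).succAbove j) * ω j))) ∘ e := by
      ext ω
      simp only [Function.comp_apply, Prod.map_apply, he,
        MeasurableEquiv.piFinSuccAbove_apply, Fin.insertNthEquiv, Equiv.coe_fn_symm_mk,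
        Fin.removeNth]
      rw [Fin.sum_univ_succAbove (fun j => a j * ω j) 0]
    rw [hcomp, ← Measure.map_map (by fun_prop) e.measurable, mp.map_eq,
      ← Measure.map_map (by fun_prop) (by fun_prop),
      ← Measure.map_prod_map _ _ (by fun_prop) (by fun_prop),
      gaussianReal_map_const_mul, ih, gaussianReal_conv]
    rw [Fin.sum_univ_succAbove (fun j => a j * μ j) 0,
      Fin.sum_univ_succAbove (fun j => nnsq (a j) * v j) 0]
    rfl

lemma linform {κ : Type*} [Fintype κ] (a μ : κ → ℝ) (v : κ → ℝ≥0) :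
    Measure.map (fun ω : κ → ℝ => ∑ p, a p * ω p)
      (Measure.pi fun p => gaussianReal (μ p) (v p))
      = gaussianReal (∑ p, a p * μ p) (∑ p, nnsq (a p) * v p) := by
  classical
  set e : Fin (Fintype.card κ) ≃ κ := (Fintype.equivFin κ).symm with he
  have mp := measurePreserving_piCongrLeft (fun p => gaussianReal (μ p) (v p)) e
  have hcomp : (fun ω : κ → ℝ => ∑ p, a p * ω p)
      ∘ (MeasurableEquiv.piCongrLeft (fun _ : κ => ℝ) e)
      = fun ω : Fin (Fintype.card κ) → ℝ => ∑ j, a (e j) * ω j := by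
    ext ω
    simp only [Function.comp_apply]
    rw [← Equiv.sum_comp e (fun p => a p * (MeasurableEquiv.piCongrLeft (fun _ : κ => ℝ) e) ω p)]
    refine Finset.sum_congr rfl fun j _ => ?_
    congr 1
    have h1 : (MeasurableEquiv.piCongrLeft (fun _ : κ => ℝ) e) ω (e j)
        = (Equiv.piCongrLeft (fun _ : κ => ℝ) e) ω (e j) := rfl
    rw [h1, Equiv.piCongrLeft_apply_apply]
  rw [← mp.map_eq, Measure.map_map (by fun_prop) (MeasurableEquiv.measurable _), hcomp,
    linform_fin, ← Equiv.sum_comp e (fun p => a p * μ p),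
    ← Equiv.sum_comp e (fun p => nnsq (a p) * v p)]

lemma map_withDensity_equiv {α β : Type*} [MeasurableSpace α] [MeasurableSpace β]
    (e : α ≃ᵐ β) (μ : Measure α) (f : β → ℝ≥0∞) (hf : Measurable f) :
    (μ.map e).withDensity f = (μ.withDensity (fun a => f (e a))).map e := by
  ext s hs
  rw [withDensity_apply _ hs, Measure.map_apply e.measurable hs,
    withDensity_apply _ (e.measurable hs), setLIntegral_map hs hf e.measurable]

lemma gaussianReal_shift (μ δ : ℝ) (v : ℝ≥0) (hv : v ≠ 0) :
    gaussianReal (μ + δ) v = (gaussianReal μ v).withDensity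
      (fun y => ENNReal.ofReal (rexp (δ * (y - μ) / v - δ ^ 2 / (2 * v)))) := by
  have hv' : (0:ℝ) < (v:ℝ) := lt_of_le_of_ne v.2 (by exact_mod_cast (Ne.symm hv))
  rw [gaussianReal_of_var_ne_zero _ hv, gaussianReal_of_var_ne_zero _ hv,
    ← withDensity_mul _ (measurable_gaussianPDF _ _) (by fun_prop)]
  congr 1
  funext y
  simp only [Pi.mul_apply, gaussianPDF, gaussianPDFReal_def]
  rw [← ENNReal.ofReal_mul (by positivity)]
  congr 1
  rw [mul_assoc _ (rexp _) (rexp _), ← Real.exp_add]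
  congr 2
  field_simp
  ring

lemma pi_gauss_shift_fin : ∀ (n : ℕ) (μ δ : Fin n → ℝ) (v : Fin n → ℝ≥0), (∀ j, v j ≠ 0) →
    Measure.pi (fun j => gaussianReal (μ j + δ j) (v j))
      = (Measure.pi fun j => gaussianReal (μ j) (v j)).withDensity
          (fun ω => ENNReal.ofReal
            (rexp (∑ j, (δ j * (ω j - μ j) / v j - δ j ^ 2 / (2 * v j))))) := by
  intro n
  induction n with
  | zero =>
    intro μ δ v hv
    rw [Measure.pi_of_empty, Measure.pi_of_empty]
    have h0 : (fun ω : Fin 0 → ℝ => ENNReal.ofReal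
        (rexp (∑ j, (δ j * (ω j - μ j) / v j - δ j ^ 2 / (2 * v j))))) = fun _ => 1 := by
      ext ω; simp
    rw [h0]
    exact withDensity_one.symm
  | succ n ih =>
    intro μ δ v hv
    set e := MeasurableEquiv.piFinSuccAbove (fun _ : Fin (n+1) => ℝ) 0 with he
    have mp := measurePreserving_piFinSuccAbove (fun j => gaussianReal (μ j) (v j)) 0
    have mp' := measurePreserving_piFinSuccAbove
      (fun j => gaussianReal (μ j + δ j) (v j)) 0
    -- notation for the density functions
    set f0 : ℝ → ℝ≥0∞ := fun y =>
      ENNReal.ofReal (rexp (δ 0 * (y - μ 0) / v 0 - δ 0 ^ 2 / (2 * v 0))) with hf0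
    set Frest : (Fin n → ℝ) → ℝ≥0∞ := fun ω => ENNReal.ofReal
      (rexp (∑ j : Fin n, (δ ((0:Fin (n+1)).succAbove j)
          * (ω j - μ ((0:Fin (n+1)).succAbove j)) / v ((0:Fin (n+1)).succAbove j)
        - δ ((0:Fin (n+1)).succAbove j) ^ 2 / (2 * v ((0:Fin (n+1)).succAbove j))))) with hFrest
    set F : (Fin (n+1) → ℝ) → ℝ≥0∞ := fun ω => ENNReal.ofReal
      (rexp (∑ j, (δ j * (ω j - μ j) / v j - δ j ^ 2 / (2 * v j)))) with hF
    have hFmeas : Measurable F := by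
      apply ENNReal.measurable_ofReal.comp
      apply Real.measurable_exp.comp
      exact Finset.measurable_sum _ (fun j _ => by fun_prop)
    have hFact : ∀ q : ℝ × (Fin n → ℝ), F (e.symm q) = f0 q.1 * Frest q.2 := by
      intro q
      simp only [hF, hf0, hFrest, he, MeasurableEquiv.piFinSuccAbove_symm_apply,
        Fin.insertNthEquiv_apply]
      rw [Fin.sum_univ_succAbove _ (0 : Fin (n+1))]
      simp only [Fin.insertNth_apply_same, Fin.insertNth_apply_succAbove]
      rw [Real.exp_add, ENNReal.ofReal_mul (by positivity)]
    -- key product identity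
    have hprod : (gaussianReal (μ 0 + δ 0) (v 0)).prod
          (Measure.pi fun j => gaussianReal
            (μ ((0:Fin (n+1)).succAbove j) + δ ((0:Fin (n+1)).succAbove j))
            (v ((0:Fin (n+1)).succAbove j)))
        = ((gaussianReal (μ 0) (v 0)).prod
            (Measure.pi fun j => gaussianReal (μ ((0:Fin (n+1)).succAbove j))
              (v ((0:Fin (n+1)).succAbove j)))).withDensity (fun q => f0 q.1 * Frest q.2) := by
      have hf0m : Measurable f0 := by fun_prop
      have hFrestm : Measurable Frest := by
        apply ENNReal.measurable_ofReal.comp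
        apply Real.measurable_exp.comp
        exact Finset.measurable_sum _ (fun j _ => by fun_prop)
      refine Measure.prod_eq fun s t hs ht => ?_
      rw [withDensity_apply _ (hs.prod ht), ← lintegral_indicator (hs.prod ht)]
      have hind : (s ×ˢ t).indicator (fun q : ℝ × (Fin n → ℝ) => f0 q.1 * Frest q.2)
          = fun q => (s.indicator f0 q.1) * (t.indicator Frest q.2) := by
        funext q
        by_cases h1 : q.1 ∈ s <;> by_cases h2 : q.2 ∈ t <;>
          simp [Set.indicator, h1, h2, Set.mem_prod]
      rw [hind, lintegral_prod_mul (hf0m.indicator hs).aemeasurable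
        (hFrestm.indicator ht).aemeasurable,
        lintegral_indicator hs, lintegral_indicator ht,
        ← withDensity_apply _ hs, ← withDensity_apply _ ht,
        ← gaussianReal_shift _ _ _ (hv 0), ← ih _ _ _ (fun j => hv _)]
    rw [← (mp'.symm e).map_eq, ← (mp.symm e).map_eq, hprod,
      map_withDensity_equiv e.symm _ F hFmeas]
    have hFe : (fun q : ℝ × (Fin n → ℝ) => F (e.symm q)) = fun q => f0 q.1 * Frest q.2 :=
      funext hFact
    rw [hFe]

lemma pi_gauss_shift {κ : Type*} [Fintype κ] (μ δ : κ → ℝ) (v : κ → ℝ≥0)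
    (hv : ∀ p, v p ≠ 0) :
    Measure.pi (fun p => gaussianReal (μ p + δ p) (v p))
      = (Measure.pi fun p => gaussianReal (μ p) (v p)).withDensity
          (fun ω => ENNReal.ofReal
            (rexp (∑ p, (δ p * (ω p - μ p) / v p - δ p ^ 2 / (2 * v p))))) := by
  classical
  set e : Fin (Fintype.card κ) ≃ κ := (Fintype.equivFin κ).symm with he
  set ec := MeasurableEquiv.piCongrLeft (fun _ : κ => ℝ) e with hec
  have mp := measurePreserving_piCongrLeft (fun p => gaussianReal (μ p) (v p)) e
  have mp' := measurePreserving_piCongrLeft (fun p => gaussianReal (μ p + δ p) (v p)) e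
  set F : (κ → ℝ) → ℝ≥0∞ := fun ω => ENNReal.ofReal
    (rexp (∑ p, (δ p * (ω p - μ p) / v p - δ p ^ 2 / (2 * v p)))) with hF
  have hFmeas : Measurable F := by
    apply ENNReal.measurable_ofReal.comp
    apply Real.measurable_exp.comp
    exact Finset.measurable_sum _ (fun p _ => by fun_prop)
  have hcompF : (fun ω : Fin (Fintype.card κ) → ℝ => F (ec ω))
      = fun ω => ENNReal.ofReal (rexp (∑ j, (δ (e j) * (ω j - μ (e j)) / v (e j)
          - δ (e j) ^ 2 / (2 * v (e j))))) := by
    funext ω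
    simp only [hF]
    congr 1
    congr 1
    rw [← Equiv.sum_comp e (fun p => δ p * (ec ω p - μ p) / v p - δ p ^ 2 / (2 * v p))]
    refine Finset.sum_congr rfl fun j _ => ?_
    have h1 : ec ω (e j) = ω j := Equiv.piCongrLeft_apply_apply (fun _ : κ => ℝ) e ω j
    rw [h1]
  rw [← mp'.map_eq, ← mp.map_eq, pi_gauss_shift_fin _ (fun j => μ (e j)) (fun j => δ (e j))
    (fun j => v (e j)) (fun j => hv (e j)), map_withDensity_equiv ec _ F hFmeas, hcompF]

lemma gauss_pi_dominance {κ : Type*} [Fintype κ] (gm δ : κ → ℝ) (v : κ → ℝ≥0)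
    (hv : ∀ p, v p ≠ 0) (E : Set (κ → ℝ)) (hE : MeasurableSet E) (a ε2 : ℝ)
    (hε2 : ε2 = ∑ p, δ p ^ 2 / (v p : ℝ))
    (h : ENNReal.ofReal (stdNormalCDF a)
      ≤ Measure.pi (fun p => gaussianReal (gm p) (v p)) E) :
    ENNReal.ofReal (stdNormalCDF (a - Real.sqrt ε2))
      ≤ Measure.pi (fun p => gaussianReal (gm p + δ p) (v p)) E := by
  classical
  have hvpos : ∀ p, (0:ℝ) < (v p : ℝ) := fun p =>
    lt_of_le_of_ne (v p).2 (by exact_mod_cast (Ne.symm (hv p)))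
  have hε2nonneg : 0 ≤ ε2 := hε2 ▸ Finset.sum_nonneg fun p _ => by positivity
  set P := Measure.pi (fun p => gaussianReal (gm p) (v p)) with hP
  set P' := Measure.pi (fun p => gaussianReal (gm p + δ p) (v p)) with hP'
  haveI hPprob : IsProbabilityMeasure P := by rw [hP]; infer_instance
  rcases eq_or_lt_of_le hε2nonneg with hz | hε2pos
  · -- ε2 = 0 : all δ p = 0
    have hδ0 : ∀ p, δ p = 0 := by
      intro p
      have hsum0 : ∑ q, δ q ^ 2 / (v q : ℝ) = 0 := by rw [← hε2, ← hz]
      have := (Finset.sum_eq_zero_iff_of_nonneg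
        (fun q _ => by positivity : ∀ q ∈ Finset.univ, 0 ≤ δ q ^ 2 / (v q : ℝ))).1 hsum0
        p (Finset.mem_univ p)
      have h2 : δ p ^ 2 = 0 := by
        rcases div_eq_zero_iff.1 this with h' | h'
        · exact h'
        · exact absurd h' (hvpos p).ne'
      exact pow_eq_zero_iff (n := 2) (by norm_num) |>.1 h2
    have hPP' : P' = P := by
      rw [hP, hP']
      congr 1
      funext p
      rw [hδ0 p, add_zero]
    rw [hPP', ← hz, Real.sqrt_zero, sub_zero]
    exact h
  -- main case
  set ε := Real.sqrt ε2 with hεdef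
  have hεpos : 0 < ε := Real.sqrt_pos.2 hε2pos
  have hεsq : ε * ε = ε2 := Real.mul_self_sqrt hε2nonneg
  set w : κ → ℝ := fun p => δ p / (v p : ℝ) with hw
  set S : (κ → ℝ) → ℝ := fun ω => ∑ p, w p * ω p with hS
  have hSmeas : Measurable S := by
    rw [hS]
    exact Finset.measurable_sum _ (fun p _ => (measurable_pi_apply p).const_mul _)
  set S0 := ∑ p, w p * gm p with hS0
  set tval := S0 + ε * a with htval
  set A : Set (κ → ℝ) := S ⁻¹' (Set.Iic tval) with hA
  have hAmeas : MeasurableSet A := hSmeas measurableSet_Iic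
  set V : ℝ≥0 := ∑ p, nnsq (w p) * v p with hV
  have hVcoe : (V : ℝ) = ε2 := by
    rw [hV, NNReal.coe_sum, hε2]
    refine Finset.sum_congr rfl fun p _ => ?_
    rw [NNReal.coe_mul]
    show w p ^ 2 * (v p : ℝ) = δ p ^ 2 / (v p : ℝ)
    rw [hw]
    rw [div_pow, div_mul_eq_mul_div, div_eq_div_iff (pow_ne_zero 2 (hvpos p).ne') (hvpos p).ne']
    ring
  have hVne : V ≠ 0 := by
    intro h0
    rw [h0] at hVcoe
    simp at hVcoe
    exact hε2pos.ne' hVcoe.symm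
  have hsqrtV : Real.sqrt V = ε := by rw [hVcoe]
  have hwδ : ∑ p, w p * δ p = ε2 := by
    rw [hε2, hw]
    refine Finset.sum_congr rfl fun p _ => ?_
    field_simp
  -- law of S under P and P'
  have hPA : P A = ENNReal.ofReal (stdNormalCDF a) := by
    rw [hA, ← Measure.map_apply hSmeas measurableSet_Iic, hP, hS, linform w gm v,
      gaussianReal_Iic _ _ hVne, hsqrtV]
    congr 2
    rw [htval, ← hS0]
    field_simp
    ring
  have hP'A : P' A = ENNReal.ofReal (stdNormalCDF (a - ε)) := by
    rw [hA, ← Measure.map_apply hSmeas measurableSet_Iic, hP', hS,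
      linform w (fun p => gm p + δ p) v, gaussianReal_Iic _ _ hVne, hsqrtV]
    congr 2
    have hsum' : ∑ p, w p * (gm p + δ p) = S0 + ε2 := by
      simp_rw [mul_add]
      rw [Finset.sum_add_distrib, hwδ, hS0]
    rw [hsum', htval, ← hεsq]
    field_simp
    ring
  -- density of P' w.r.t. P
  set ρ : (κ → ℝ) → ℝ≥0∞ := fun ω => ENNReal.ofReal (rexp (S ω - S0 - ε2 / 2)) with hρ
  have hρmeas : Measurable ρ := by
    rw [hρ]
    exact ENNReal.measurable_ofReal.comp
      (Real.measurable_exp.comp ((hSmeas.sub measurable_const).sub measurable_const))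
  have hden : P' = P.withDensity ρ := by
    rw [hP', pi_gauss_shift gm δ v hv, hP]
    congr 1
    funext ω
    rw [hρ]
    congr 2
    have hterm : ∀ p, δ p * (ω p - gm p) / (v p : ℝ) - δ p ^ 2 / (2 * (v p : ℝ))
        = w p * ω p - w p * gm p - (δ p ^ 2 / (v p : ℝ)) / 2 := by
      intro p
      rw [hw]
      field_simp
    rw [Finset.sum_congr rfl (fun p _ => hterm p), Finset.sum_sub_distrib,
      Finset.sum_sub_distrib, ← Finset.sum_div, ← hε2, hS, hS0]
  -- Neyman–Pearson comparison
  set K : ℝ≥0∞ := ENNReal.ofReal (rexp (ε * a - ε2 / 2)) with hK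
  have hρA : ∀ ω ∈ A, ρ ω ≤ K := by
    intro ω hω
    rw [hρ, hK]
    refine ENNReal.ofReal_le_ofReal (Real.exp_le_exp.2 ?_)
    have : S ω ≤ tval := hω
    rw [htval] at this
    linarith
  have hρAc : ∀ ω, ω ∉ A → K ≤ ρ ω := by
    intro ω hω
    rw [hρ, hK]
    refine ENNReal.ofReal_le_ofReal (Real.exp_le_exp.2 ?_)
    have : ¬ S ω ≤ tval := hω
    have h2 : tval ≤ S ω := (not_le.1 this).le
    rw [htval] at h2
    linarith
  have hPEA : P (A \ E) ≤ P (E \ A) := by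
    have h1 : P (E ∩ A) + P (E \ A) = P E := measure_inter_add_diff E hAmeas
    have h2 : P (A ∩ E) + P (A \ E) = P A := measure_inter_add_diff A hE
    have hPAle : P A ≤ P E := by
      rw [hPA]
      exact h
    rw [Set.inter_comm] at h2
    refine (ENNReal.add_le_add_iff_left (measure_ne_top P (E ∩ A))).1 ?_
    rw [h1, h2]
    exact hPAle
  calc ENNReal.ofReal (stdNormalCDF (a - ε)) = P' A := hP'A.symm
    _ = ∫⁻ ω in A ∩ E, ρ ω ∂P + ∫⁻ ω in A \ E, ρ ω ∂P := by
        rw [hden, withDensity_apply _ hAmeas, ← lintegral_inter_add_diff ρ A hE]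
    _ ≤ ∫⁻ ω in A ∩ E, ρ ω ∂P + K * P (A \ E) := by
        refine add_le_add_right ?_ _
        calc ∫⁻ ω in A \ E, ρ ω ∂P ≤ ∫⁻ _ in A \ E, K ∂P :=
              setLIntegral_mono measurable_const (fun ω hω => hρA ω hω.1)
          _ = K * P (A \ E) := setLIntegral_const _ _
    _ ≤ ∫⁻ ω in A ∩ E, ρ ω ∂P + K * P (E \ A) :=
        add_le_add_right (mul_le_mul_right hPEA K) _
    _ ≤ ∫⁻ ω in A ∩ E, ρ ω ∂P + ∫⁻ ω in E \ A, ρ ω ∂P := by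
        refine add_le_add_right ?_ _
        calc K * P (E \ A) = ∫⁻ _ in E \ A, K ∂P := (setLIntegral_const _ _).symm
          _ ≤ ∫⁻ ω in E \ A, ρ ω ∂P :=
              setLIntegral_mono hρmeas (fun ω hω => hρAc ω hω.2)
    _ = ∫⁻ ω in E ∩ A, ρ ω ∂P + ∫⁻ ω in E \ A, ρ ω ∂P := by rw [Set.inter_comm]
    _ = ∫⁻ ω in E, ρ ω ∂P := lintegral_inter_add_diff ρ E hAmeas
    _ = P' E := by rw [hden, withDensity_apply _ hE]


/-- Mechanism-level whole-image dominance underlying Theorem 1: the product over all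
steps `t` and pixels `i` of the Gaussian releases `N(m t i + c t i * x i, σt t i ^ 2)`,
with the per-pixel filter guarantee `∑ t, c t i ^ 2 / σt t i ^ 2 ≤ 1 / σ ^ 2` for every
pixel `i`, is `(‖x - x'‖₂/σ)`-GDP in CDF form. -/
theorem guided_denoising_image_dominance
    {ι : Type*} [Fintype ι] (d : ℕ) (hd : 1 ≤ d) (σ : ℝ) (hσ : 0 < σ)
    (σt c m : ι → Fin d → ℝ) (hσt : ∀ t i, 0 < σt t i)
    (hfilter : ∀ i, ∑ t, c t i ^ 2 / σt t i ^ 2 ≤ 1 / σ ^ 2)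
    (x x' : EuclideanSpace ℝ (Fin d))
    (E : Set (ι × Fin d → ℝ)) (hE : MeasurableSet E) (a : ℝ)
    (h : (Measure.pi fun p : ι × Fin d =>
            gaussianReal (m p.1 p.2 + c p.1 p.2 * x p.2)
              ⟨σt p.1 p.2 ^ 2, sq_nonneg (σt p.1 p.2)⟩) E
          ≥ ENNReal.ofReal (stdNormalCDF a)) :
    (Measure.pi fun p : ι × Fin d =>
        gaussianReal (m p.1 p.2 + c p.1 p.2 * x' p.2)
          ⟨σt p.1 p.2 ^ 2, sq_nonneg (σt p.1 p.2)⟩) E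
      ≥ ENNReal.ofReal (stdNormalCDF (a - ‖x - x'‖ / σ)) := by
  classical
  rw [ge_iff_le] at h ⊢
  set v : ι × Fin d → ℝ≥0 := fun p => ⟨σt p.1 p.2 ^ 2, sq_nonneg (σt p.1 p.2)⟩ with hv
  have hvne : ∀ p, v p ≠ 0 := by
    intro p h0
    have := congrArg NNReal.toReal h0
    simp only [hv, NNReal.coe_mk, NNReal.coe_zero] at this
    exact (pow_pos (hσt p.1 p.2) 2).ne' this
  set gm : ι × Fin d → ℝ := fun p => m p.1 p.2 + c p.1 p.2 * x p.2 with hgm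
  set δ : ι × Fin d → ℝ := fun p => c p.1 p.2 * (x' p.2 - x p.2) with hδ
  set ε2 : ℝ := ∑ p : ι × Fin d, δ p ^ 2 / (v p : ℝ) with hε2
  have key : ENNReal.ofReal (stdNormalCDF (a - Real.sqrt ε2))
      ≤ Measure.pi (fun p : ι × Fin d => gaussianReal (gm p + δ p) (v p)) E := by
    refine gauss_pi_dominance gm δ v hvne E hE a ε2 hε2 ?_
    exact h
  have hmeas_eq : (Measure.pi fun p : ι × Fin d =>
      gaussianReal (m p.1 p.2 + c p.1 p.2 * x' p.2) ⟨σt p.1 p.2 ^ 2, sq_nonneg (σt p.1 p.2)⟩)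
      = Measure.pi (fun p : ι × Fin d => gaussianReal (gm p + δ p) (v p)) := by
    congr 1
    funext p
    have : m p.1 p.2 + c p.1 p.2 * x' p.2 = gm p + δ p := by
      simp only [hgm, hδ]
      ring
    rw [this]
  rw [hmeas_eq]
  refine le_trans ?_ key
  refine ENNReal.ofReal_le_ofReal (stdNormalCDF_mono ?_)
  have hr : 0 ≤ ‖x - x'‖ / σ := div_nonneg (norm_nonneg _) hσ.le
  have hεler : Real.sqrt ε2 ≤ ‖x - x'‖ / σ := by
    have hnorm2 : (‖x - x'‖ / σ) ^ 2 = (∑ i, (x i - x' i) ^ 2) / σ ^ 2 := by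
      rw [div_pow, EuclideanSpace.norm_eq,
        Real.sq_sqrt (Finset.sum_nonneg fun i _ => sq_nonneg _)]
      congr 1
      refine Finset.sum_congr rfl fun i _ => ?_
      rw [PiLp.sub_apply, Real.norm_eq_abs, sq_abs]
    have hε2le : ε2 ≤ (‖x - x'‖ / σ) ^ 2 := by
      rw [hnorm2, hε2]
      have hswap : ∑ p : ι × Fin d, δ p ^ 2 / (v p : ℝ)
          = ∑ i, (x i - x' i) ^ 2 * ∑ t, c t i ^ 2 / σt t i ^ 2 := by
        rw [Fintype.sum_prod_type, Finset.sum_comm]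
        refine Finset.sum_congr rfl fun i _ => ?_
        rw [Finset.mul_sum]
        refine Finset.sum_congr rfl fun t _ => ?_
        simp only [hδ, hv, NNReal.coe_mk]
        rw [mul_pow]
        have hsq : (x' i - x i) ^ 2 = (x i - x' i) ^ 2 := by ring
        rw [mul_comm, mul_div_assoc, hsq]
        rfl
      rw [hswap, Finset.sum_div]
      refine Finset.sum_le_sum fun i _ => ?_
      calc (x i - x' i) ^ 2 * ∑ t, c t i ^ 2 / σt t i ^ 2
          ≤ (x i - x' i) ^ 2 * (1 / σ ^ 2) :=
            mul_le_mul_of_nonneg_left (hfilter i) (sq_nonneg _)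
        _ = (x i - x' i) ^ 2 / σ ^ 2 := by ring
    calc Real.sqrt ε2 ≤ Real.sqrt ((‖x - x'‖ / σ) ^ 2) := Real.sqrt_le_sqrt hε2le
      _ = ‖x - x'‖ / σ := Real.sqrt_sq hr
  linarith
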